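/- Let R(x) = 1 - G(x) where G is the Gauss map, and let x ∈ (0,1) be irrational with regular continued fraction expansion [0; x₁, x₂, x₃, …]. Then for each j ≥ 1, R^{x₂+x₄+⋯+x_{2j}}(x) = [0; x_{2j+1}+1, x_{2j+2}, x_{2j+3}, …], and if 0 < ℓ < x_{2j}, then R^{x₂+x₄+⋯+x_{2j-2}+ℓ}(x) = [0; 1, x_{2j}-ℓ, x_{2j+1}, x_{2j+2}, …]. -/

import Mathlib

open Set MeasureTheory Filter Topology
open scoped Classical

/-- The Gauss map `G(x) = 1/x - ⌊1/x⌋`. -/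
noncomputable def gauss (x : ℝ) : ℝ := Int.fract (1 / x)

/-- The flipped region `D_α = ⋃_{n ≥ 1} [1/(n+α), 1/n]`. -/
def Dset (α : ℝ) : Set ℝ := ⋃ n : ℕ, Set.Icc (1 / ((n : ℝ) + 1 + α)) (1 / ((n : ℝ) + 1))

/-- The flipped α-continued fraction map `T_α`. -/
noncomputable def T (α x : ℝ) : ℝ := if x ∈ Dset α then 1 - gauss x else gauss x

/-- The map `R = 1 - G`. -/
noncomputable def Rmap (x : ℝ) : ℝ := 1 - gauss x

lemma gauss_irrational {x : ℝ} (h : Irrational x) : Irrational (gauss x) := by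
  have h1 : Irrational (1 / x) := by simpa [one_div] using h.inv
  rw [gauss, Int.fract]
  exact h1.sub_intCast _

lemma gauss_mem {x : ℝ} (h : Irrational x) : gauss x ∈ Set.Ioo (0:ℝ) 1 := by
  refine ⟨lt_of_le_of_ne (Int.fract_nonneg _) ?_, Int.fract_lt_one _⟩
  intro h0
  exact (gauss_irrational h).ne_int 0 (by exact_mod_cast h0.symm)

lemma Rmap_irrational {x : ℝ} (h : Irrational x) : Irrational (Rmap x) := by
  simpa [Rmap] using ((gauss_irrational h).intCast_sub 1)

lemma Rmap_mem {x : ℝ} (h : Irrational x) : Rmap x ∈ Set.Ioo (0:ℝ) 1 := by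
  have := gauss_mem h
  exact ⟨by simp [Rmap]; linarith [this.2], by simp [Rmap]; linarith [this.1]⟩

lemma Rmap_iter {x : ℝ} (h : Irrational x) (hx : x ∈ Set.Ioo (0:ℝ) 1) (n : ℕ) :
    Irrational (Rmap^[n] x) ∧ Rmap^[n] x ∈ Set.Ioo (0:ℝ) 1 := by
  induction n with
  | zero => exact ⟨h, hx⟩
  | succ n ih =>
      rw [Function.iterate_succ_apply']
      exact ⟨Rmap_irrational ih.1, Rmap_mem ih.1⟩

lemma floor_one_div_pos {x : ℝ} (hx : x ∈ Set.Ioo (0:ℝ) 1) : 1 ≤ ⌊1/x⌋ :=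
  Int.le_floor.2 (by rw [Int.cast_one]; exact one_le_one_div hx.1 hx.2.le)

lemma step_final {z : ℝ} (hz : z ∈ Set.Ioo (0:ℝ) 1) (hirr : Irrational z) (hk : ⌊1/z⌋ = 1) :
    ⌊1/(1-z)⌋ = ⌊1/gauss z⌋ + 1 ∧ gauss (1 - z) = gauss (gauss z) := by
  obtain ⟨hz0, hz1⟩ := hz
  have hz1' : (0:ℝ) < 1 - z := by linarith
  have hg : gauss z = 1/z - 1 := by
    rw [gauss, Int.fract, hk]; push_cast; try ring
  have hgz0 : 0 < gauss z := (gauss_mem hirr).1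
  have hgz0' : 0 < 1/z - 1 := by rw [← hg]; exact hgz0
  have key : 1/(1-z) = 1/(gauss z) + 1 := by
    rw [hg]; field_simp; try ring
  refine ⟨?_, ?_⟩
  · rw [key, Int.floor_add_one]
  · show Int.fract (1/(1-z)) = Int.fract (1/gauss z)
    rw [key, Int.fract_add_one]

lemma step_mid {z : ℝ} (hz : z ∈ Set.Ioo (0:ℝ) 1) (hirr : Irrational z) (hk : 2 ≤ ⌊1/z⌋) :
    ⌊1/(1-z)⌋ = 1 ∧ ⌊1/gauss (1-z)⌋ = ⌊1/z⌋ - 1 ∧ gauss (gauss (1-z)) = gauss z := by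
  obtain ⟨hz0, hz1⟩ := hz
  have hinv : Irrational (1/z) := by simpa [one_div] using hirr.inv
  have h2le : (2:ℝ) ≤ 1/z := by exact_mod_cast Int.le_floor.1 hk
  have h2 : (2:ℝ) < 1/z := by
    rcases lt_or_eq_of_le h2le with h | h
    · exact h
    · exact absurd (by exact_mod_cast h.symm) (hinv.ne_int 2)
  have h2z : 2 * z < 1 := (lt_div_iff₀ hz0).1 h2
  have hzhalf : z < 1/2 := by linarith
  have hw0 : (0:ℝ) < 1 - z := by linarith
  have hw1 : (1:ℝ) < 1/(1-z) := by rw [lt_div_iff₀ hw0]; linarith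
  have hw2 : 1/(1-z) < 2 := by rw [div_lt_iff₀ hw0]; linarith
  have hfw : ⌊1/(1-z)⌋ = 1 := by
    apply Int.floor_eq_iff.2
    constructor
    · push_cast; linarith
    · push_cast; linarith
  have hg : gauss (1-z) = z/(1-z) := by
    rw [gauss, Int.fract, hfw]; push_cast; field_simp; ring
  have hg0 : 0 < z/(1-z) := div_pos hz0 hw0
  have h1g : 1/gauss (1-z) = 1/z - 1 := by
    rw [hg, one_div_div]; field_simp; try ring
  refine ⟨hfw, ?_, ?_⟩
  · rw [h1g, show (1:ℝ) = ((1:ℤ):ℝ) by norm_num, Int.floor_sub_intCast]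
  · show Int.fract (1/gauss (1-z)) = Int.fract (1/z)
    rw [h1g, show (1:ℝ) = ((1:ℤ):ℝ) by norm_num, Int.fract_sub_intCast]

lemma gauss_iter_add (n : ℕ) (t : ℝ) : gauss^[n+1] t = gauss (gauss^[n] t) :=
  Function.iterate_succ_apply' _ _ _

lemma key_lemma {y : ℝ} (hy : y ∈ Set.Ioo (0:ℝ) 1) (hirr : Irrational y) (m : ℕ)
    (hm : (m : ℤ) = ⌊1/(gauss y)⌋) :
    (∀ ℓ : ℕ, 0 < ℓ → ℓ < m →
       ⌊1/(Rmap^[ℓ] y)⌋ = 1 ∧ ⌊1/(gauss (Rmap^[ℓ] y))⌋ = (m:ℤ) - ℓ ∧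
       gauss (gauss (Rmap^[ℓ] y)) = gauss (gauss y)) ∧
    (⌊1/(Rmap^[m] y)⌋ = ⌊1/(gauss (gauss y))⌋ + 1 ∧
       gauss (Rmap^[m] y) = gauss (gauss (gauss y))) := by
  have hgy := gauss_mem hirr
  have hm1 : 1 ≤ m := by
    have := floor_one_div_pos hgy; omega
  have inv : ∀ ℓ : ℕ, ℓ < m →
      (⌊1/(gauss (Rmap^[ℓ] y))⌋ = (m:ℤ) - ℓ ∧
        gauss (gauss (Rmap^[ℓ] y)) = gauss (gauss y)) ∧
      (0 < ℓ → ⌊1/(Rmap^[ℓ] y)⌋ = 1) := by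
    intro ℓ
    induction ℓ with
    | zero => intro _; exact ⟨⟨by simpa using hm.symm, rfl⟩, by omega⟩
    | succ ℓ ih =>
        intro hlt
        obtain ⟨⟨hf, hgg⟩, _⟩ := ih (by omega)
        set w := Rmap^[ℓ] y with hw
        have hwprop := Rmap_iter hirr hy ℓ
        have hzirr : Irrational (gauss w) := gauss_irrational hwprop.1
        have hzmem : gauss w ∈ Set.Ioo (0:ℝ) 1 := gauss_mem hwprop.1
        have hk2 : 2 ≤ ⌊1/(gauss w)⌋ := by rw [hf]; omega
        obtain ⟨s1, s2, s3⟩ := step_mid hzmem hzirr hk2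
        have hsucc : Rmap^[ℓ+1] y = 1 - gauss w := by
          rw [Function.iterate_succ_apply']; rfl
        refine ⟨⟨?_, ?_⟩, fun _ => by rw [hsucc]; exact s1⟩
        · rw [hsucc, s2, hf]; push_cast; ring
        · rw [hsucc, s3, hgg]
  refine ⟨fun ℓ hℓ0 hℓm => ⟨(inv ℓ hℓm).2 hℓ0, (inv ℓ hℓm).1.1, (inv ℓ hℓm).1.2⟩, ?_⟩
  obtain ⟨⟨hf, hgg⟩, _⟩ := inv (m-1) (by omega)
  set w := Rmap^[m-1] y with hw
  have hwprop := Rmap_iter hirr hy (m-1)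
  have hzirr : Irrational (gauss w) := gauss_irrational hwprop.1
  have hzmem : gauss w ∈ Set.Ioo (0:ℝ) 1 := gauss_mem hwprop.1
  have hk1 : ⌊1/(gauss w)⌋ = 1 := by
    rw [hf]; push_cast [Nat.cast_sub hm1]; ring
  obtain ⟨s1, s2⟩ := step_final hzmem hzirr hk1
  have hsucc : Rmap^[m] y = 1 - gauss w := by
    conv_lhs => rw [show m = (m-1)+1 by omega]
    rw [Function.iterate_succ_apply']; rfl
  constructor
  · rw [hsucc, s1, hgg]
  · rw [hsucc, s2, hgg]

/-- iterates of `R = 1 - G` in terms of the regular continued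
fraction digits of an irrational `x`.  Here `a n` is the `(n+1)`-st digit of
`x`, i.e. the paper's `xₙ` is `a (n-1)`. -/
theorem stmt_6 (x : ℝ) (hx : x ∈ Set.Ioo (0:ℝ) 1) (hirr : Irrational x)
    (a : ℕ → ℕ) (ha : ∀ n, (a n : ℤ) = ⌊1 / (gauss^[n] x)⌋) (j : ℕ) (hj : 1 ≤ j) :
    (⌊1 / (Rmap^[∑ i ∈ Finset.range j, a (2*i+1)] x)⌋ = (a (2*j) : ℤ) + 1 ∧
      gauss (Rmap^[∑ i ∈ Finset.range j, a (2*i+1)] x) = gauss^[2*j+1] x) ∧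
    (∀ ℓ : ℕ, 0 < ℓ → ℓ < a (2*j-1) →
      ⌊1 / (Rmap^[(∑ i ∈ Finset.range (j-1), a (2*i+1)) + ℓ] x)⌋ = 1 ∧
      ⌊1 / gauss (Rmap^[(∑ i ∈ Finset.range (j-1), a (2*i+1)) + ℓ] x)⌋
        = (a (2*j-1) : ℤ) - (ℓ : ℤ) ∧
      gauss^[2] (Rmap^[(∑ i ∈ Finset.range (j-1), a (2*i+1)) + ℓ] x)
        = gauss^[2*j] x) := by
  -- the invariant: G(R^[S j] x) = G^[2j+1] x
  have hC : ∀ k : ℕ, gauss (Rmap^[∑ i ∈ Finset.range k, a (2*i+1)] x) = gauss^[2*k+1] x := by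
    intro k
    induction k with
    | zero => simp
    | succ k ih =>
        set S := ∑ i ∈ Finset.range k, a (2*i+1) with hS
        have hy := Rmap_iter hirr hx S
        have hm : ((a (2*k+1) : ℤ)) = ⌊1/(gauss (Rmap^[S] x))⌋ := by
          rw [ih]; exact ha (2*k+1)
        obtain ⟨_, _, hb⟩ := key_lemma hy.2 hy.1 (a (2*k+1)) hm
        have hit : Rmap^[∑ i ∈ Finset.range (k+1), a (2*i+1)] x
            = Rmap^[a (2*k+1)] (Rmap^[S] x) := by
          rw [Finset.sum_range_succ, add_comm, Function.iterate_add_apply]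
        rw [hit, hb, ih, show 2*(k+1)+1 = (2*k+1)+1+1 by omega]
        simp only [gauss_iter_add]
  obtain ⟨j', rfl⟩ : ∃ j', j = j' + 1 := ⟨j - 1, by omega⟩
  set S := ∑ i ∈ Finset.range j', a (2*i+1) with hS
  have hy := Rmap_iter hirr hx S
  have hCj := hC j'
  have hm : ((a (2*j'+1) : ℤ)) = ⌊1/(gauss (Rmap^[S] x))⌋ := by
    rw [hCj]; exact ha (2*j'+1)
  obtain ⟨hA, hb1, hb2⟩ := key_lemma hy.2 hy.1 (a (2*j'+1)) hm
  have hgg : gauss (gauss (Rmap^[S] x)) = gauss^[2*(j'+1)] x := by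
    rw [hCj, show 2*(j'+1) = (2*j'+1)+1 by omega]
    simp only [gauss_iter_add]
  have hidx : 2*(j'+1)-1 = 2*j'+1 := by omega
  have hidx2 : (j'+1)-1 = j' := by omega
  constructor
  · have hit : Rmap^[∑ i ∈ Finset.range (j'+1), a (2*i+1)] x
        = Rmap^[a (2*j'+1)] (Rmap^[S] x) := by
      rw [Finset.sum_range_succ, add_comm, Function.iterate_add_apply]
    constructor
    · rw [hit, hb1, hgg]
      have := ha (2*(j'+1))
      omega
    · rw [hit, hb2, hCj, show 2*(j'+1)+1 = (2*j'+1)+1+1 by omega]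
      simp only [gauss_iter_add]
  · intro ℓ hℓ0 hℓm
    rw [hidx] at hℓm ⊢
    rw [hidx2]
    have hit : Rmap^[S + ℓ] x = Rmap^[ℓ] (Rmap^[S] x) := by
      rw [add_comm, Function.iterate_add_apply]
    obtain ⟨t1, t2, t3⟩ := hA ℓ hℓ0 hℓm
    refine ⟨by rw [hit]; exact t1, by rw [hit]; exact t2, ?_⟩
    rw [hit]
    show gauss (gauss (Rmap^[ℓ] (Rmap^[S] x))) = _
    rw [t3, hgg]
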